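/- arXiv:1104.4001 — 2 statements merged into one kernel-verified Lean document; each statement's English description precedes it below -/
import Mathlib

section
/- Let (X,d) be a metric space, κ > 0, and let f : ℝ → X satisfy the reverse triangle inequality d(f(s),f(t)) + d(f(t),f(u)) ≤ d(f(s),f(u)) + κ for all s ≤ t ≤ u. If t₀ < t₁ < … < tₙ are real numbers with d(f(tᵢ), f(t_{i+1})) ≥ 2κ for all i < n, then d(f(t₀), f(tₙ)) ≥ nκ. -/
theorem stmt_0 {X : Type*} [MetricSpace X] (κ : ℝ) (hκ : 0 < κ) (f : ℝ → X)
    (hrev : ∀ s t u : ℝ, s ≤ t → t ≤ u →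
      dist (f s) (f t) + dist (f t) (f u) ≤ dist (f s) (f u) + κ)
    (n : ℕ) (t : ℕ → ℝ) (hmono : ∀ i < n, t i < t (i + 1))
    (hbig : ∀ i < n, 2 * κ ≤ dist (f (t i)) (f (t (i + 1)))) :
    (n : ℝ) * κ ≤ dist (f (t 0)) (f (t n)) := by
  have hmono' : ∀ m, m ≤ n → t 0 ≤ t m := by
    intro m hm
    induction m with
    | zero => exact le_refl _
    | succ k ih =>
      exact le_trans (ih (Nat.le_of_succ_le hm)) (le_of_lt (hmono k (lt_of_lt_of_le (Nat.lt_succ_self k) hm)))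
  have key : ∀ m, 0 < m → m ≤ n → (m : ℝ) * κ + κ ≤ dist (f (t 0)) (f (t m)) := by
    intro m hm0 hmn
    induction m with
    | zero => exact absurd hm0 (lt_irrefl 0)
    | succ k ih =>
      rcases Nat.eq_zero_or_pos k with hk | hk
      · subst hk
        have := hbig 0 (lt_of_lt_of_le Nat.one_pos hmn)
        push_cast
        linarith
      · have hkn : k ≤ n := Nat.le_of_succ_le hmn
        have h1 := ih hk hkn
        have h2 := hbig k (lt_of_lt_of_le (Nat.lt_succ_self k) hmn)
        have h3 := hrev (t 0) (t k) (t (k + 1)) (hmono' k hkn)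
          (le_of_lt (hmono k (lt_of_lt_of_le (Nat.lt_succ_self k) hmn)))
        push_cast
        linarith
  rcases Nat.eq_zero_or_pos n with h | h
  · subst h
    simp [dist_nonneg]
  · have := key n h (le_refl n)
    linarith
end

section
/- Let T > 0, b ∈ (0,1), and let A, B ⊆ [0,T] be Lebesgue measurable sets with λ(B) ≥ (1-b/8)T and λ(A) ≥ bT. Let T' > 0 with T' ≤ bT/16. Then the set C = { s ∈ B ∩ [0, T - T'] : λ(A ∩ [s, s+T']) ≥ bT'/4 } has Lebesgue measure at least bT/4. -/
open MeasureTheory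

theorem stmt_3 (T T' b : ℝ) (hT : 0 < T) (hb : b ∈ Set.Ioo (0 : ℝ) 1)
    (hT' : 0 < T') (hT'le : T' ≤ b * T / 16)
    (A B : Set ℝ) (hA : MeasurableSet A) (hB : MeasurableSet B)
    (hAsub : A ⊆ Set.Icc 0 T) (hBsub : B ⊆ Set.Icc 0 T)
    (hBmeas : ENNReal.ofReal ((1 - b / 8) * T) ≤ volume B)
    (hAmeas : ENNReal.ofReal (b * T) ≤ volume A) :
    ENNReal.ofReal (b * T / 4) ≤
      volume {s : ℝ | s ∈ B ∩ Set.Icc 0 (T - T') ∧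
        ENNReal.ofReal (b * T' / 4) ≤ volume (A ∩ Set.Icc s (s + T'))} := by
  obtain ⟨hb0, hb1⟩ := hb
  have hbT : 0 < b * T := mul_pos hb0 hT
  have h2T' : 2 * T' ≤ b * T / 8 := by linarith
  have hT'T : T' ≤ T := by nlinarith
  set f : ℝ → ENNReal := fun s => volume (A ∩ Set.Icc s (s + T')) with hfdef
  -- measurability of f
  have hPmeas : MeasurableSet {p : ℝ × ℝ | p.2 ∈ A ∧ p.1 ≤ p.2 ∧ p.2 ≤ p.1 + T'} := by
    apply MeasurableSet.inter (measurable_snd hA)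
    exact (measurableSet_le measurable_fst measurable_snd).inter
      (measurableSet_le measurable_snd (measurable_fst.add_const T'))
  have hfmeas : Measurable f := by
    have h := measurable_measure_prodMk_left (ν := volume) hPmeas
    have heq : f = fun s => volume (Prod.mk s ⁻¹' {p : ℝ × ℝ | p.2 ∈ A ∧ p.1 ≤ p.2 ∧ p.2 ≤ p.1 + T'}) := by
      funext s
      have hpre : Prod.mk s ⁻¹' {p : ℝ × ℝ | p.2 ∈ A ∧ p.1 ≤ p.2 ∧ p.2 ≤ p.1 + T'}
          = A ∩ Set.Icc s (s + T') := by
        ext u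
        simp only [Set.mem_preimage, Set.mem_setOf_eq, Set.mem_inter_iff, Set.mem_Icc]
        try tauto
      rw [hpre]
    rw [heq]
    exact h
  -- the target set C
  set C : Set ℝ := {s : ℝ | s ∈ B ∩ Set.Icc 0 (T - T') ∧
      ENNReal.ofReal (b * T' / 4) ≤ f s} with hCdef
  have hCmeas : MeasurableSet C := by
    have : C = (B ∩ Set.Icc 0 (T - T')) ∩ f ⁻¹' Set.Ici (ENNReal.ofReal (b * T' / 4)) := by
      ext s
      simp only [hCdef, Set.mem_inter_iff, Set.mem_setOf_eq, Set.mem_preimage, Set.mem_Ici]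
    rw [this]
    exact ((hB.inter measurableSet_Icc).inter (hfmeas measurableSet_Ici))
  set S : Set ℝ := B ∩ Set.Icc 0 (T - T') with hSdef
  have hSmeas : MeasurableSet S := hB.inter measurableSet_Icc
  -- the product set
  set P : Set (ℝ × ℝ) := {p : ℝ × ℝ | p.1 ∈ Set.Icc 0 (T - T') ∧ p.2 ∈ A ∧
      p.1 ≤ p.2 ∧ p.2 ≤ p.1 + T'} with hPdef
  have hPm : MeasurableSet P := by
    apply MeasurableSet.inter (measurable_fst measurableSet_Icc)
    apply MeasurableSet.inter (measurable_snd hA)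
    exact (measurableSet_le measurable_fst measurable_snd).inter
      (measurableSet_le measurable_snd (measurable_fst.add_const T'))
  -- Tonelli: the integral of f over Icc 0 (T-T') equals volume of P
  have hfst : (volume.prod volume) P = ∫⁻ s in Set.Icc 0 (T - T'), f s := by
    rw [Measure.prod_apply hPm, ← lintegral_indicator measurableSet_Icc]
    congr 1
    ext s
    by_cases hs : s ∈ Set.Icc 0 (T - T')
    · rw [Set.indicator_of_mem hs]
      obtain ⟨hs0, hs1⟩ := hs
      congr 1
      ext u
      simp only [hPdef, Set.mem_preimage, Set.mem_setOf_eq, Set.mem_inter_iff, Set.mem_Icc]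
      try tauto
    · rw [Set.indicator_of_notMem hs]
      have hemp : (Prod.mk s ⁻¹' P) = ∅ := by
        ext u
        simp only [hPdef, Set.mem_preimage, Set.mem_setOf_eq, Set.mem_empty_iff_false, iff_false]
        intro h
        exact hs h.1
      simp [hemp]
  -- lower bound via the other section
  have hAM : ENNReal.ofReal (b * T - 2 * T') ≤ volume (A ∩ Set.Icc T' (T - T')) := by
    have hsplit : volume A ≤ volume (A ∩ Set.Icc T' (T - T')) + ENNReal.ofReal (2 * T') := by
      have : A ⊆ (A ∩ Set.Icc T' (T - T')) ∪ (Set.Ico 0 T' ∪ Set.Ioc (T - T') T) := by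
        intro u hu
        have hu' := hAsub hu
        simp only [Set.mem_Icc] at hu'
        by_cases h1 : u < T'
        · exact Or.inr (Or.inl ⟨hu'.1, h1⟩)
        · by_cases h2 : T - T' < u
          · exact Or.inr (Or.inr ⟨h2, hu'.2⟩)
          · exact Or.inl ⟨hu, le_of_not_gt h1, le_of_not_gt h2⟩
      calc volume A ≤ volume ((A ∩ Set.Icc T' (T - T')) ∪ (Set.Ico 0 T' ∪ Set.Ioc (T - T') T)) :=
            measure_mono this
        _ ≤ volume (A ∩ Set.Icc T' (T - T')) + volume (Set.Ico 0 T' ∪ Set.Ioc (T - T') T) :=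
            measure_union_le _ _
        _ ≤ volume (A ∩ Set.Icc T' (T - T')) + (volume (Set.Ico (0:ℝ) T') + volume (Set.Ioc (T - T') T)) := by
            gcongr; exact measure_union_le _ _
        _ = volume (A ∩ Set.Icc T' (T - T')) + (ENNReal.ofReal T' + ENNReal.ofReal T') := by
            rw [Real.volume_Ico, Real.volume_Ioc]; ring_nf
        _ = volume (A ∩ Set.Icc T' (T - T')) + ENNReal.ofReal (2 * T') := by
            rw [← ENNReal.ofReal_add hT'.le hT'.le]; ring_nf
    have := le_trans hAmeas hsplit
    rw [ENNReal.ofReal_sub _ (by positivity)]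
    exact tsub_le_iff_right.mpr this
  have hsnd : ENNReal.ofReal (T' * (b * T - 2 * T')) ≤ (volume.prod volume) P := by
    rw [Measure.prod_apply_symm hPm]
    have key : ∀ u ∈ A ∩ Set.Icc T' (T - T'),
        ENNReal.ofReal T' ≤ volume ((fun x => (x, u)) ⁻¹' P) := by
      intro u hu
      obtain ⟨huA, hu1, hu2⟩ := hu
      have : Set.Icc (u - T') u ⊆ (fun x => (x, u)) ⁻¹' P := by
        intro s hs
        simp only [Set.mem_Icc] at hs
        refine ⟨⟨by linarith [hu1, hs.1], by linarith [hu2, hs.2]⟩, huA, hs.2, by linarith [hs.1]⟩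
      calc ENNReal.ofReal T' = volume (Set.Icc (u - T') u) := by
            rw [Real.volume_Icc]; ring_nf
        _ ≤ _ := measure_mono this
    calc ENNReal.ofReal (T' * (b * T - 2 * T'))
        = ENNReal.ofReal T' * ENNReal.ofReal (b * T - 2 * T') := by
          rw [← ENNReal.ofReal_mul hT'.le]
      _ ≤ ENNReal.ofReal T' * volume (A ∩ Set.Icc T' (T - T')) := by gcongr
      _ = ∫⁻ _ in A ∩ Set.Icc T' (T - T'), ENNReal.ofReal T' := by
          rw [setLIntegral_const]
      _ ≤ ∫⁻ u in A ∩ Set.Icc T' (T - T'), volume ((fun x => (x, u)) ⁻¹' P) :=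
          setLIntegral_mono' (hA.inter measurableSet_Icc) key
      _ ≤ ∫⁻ u, volume ((fun x => (x, u)) ⁻¹' P) :=
          setLIntegral_le_lintegral _ _
  -- f is bounded by T'
  have hfbound : ∀ s, f s ≤ ENNReal.ofReal T' := by
    intro s
    calc f s ≤ volume (Set.Icc s (s + T')) := measure_mono Set.inter_subset_right
      _ = ENNReal.ofReal T' := by rw [Real.volume_Icc]; ring_nf
  -- measure of Icc \ B
  have hBfin : volume B ≠ ⊤ := by
    exact ne_top_of_le_ne_top (by simp) (measure_mono hBsub)
  have hdiff : volume (Set.Icc 0 (T - T') \ B) ≤ ENNReal.ofReal (b * T / 8) := by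
    have h1 : Set.Icc 0 (T - T') \ B ⊆ Set.Icc 0 T \ B := by
      apply Set.diff_subset_diff_left
      exact Set.Icc_subset_Icc le_rfl (by linarith)
    calc volume (Set.Icc 0 (T - T') \ B) ≤ volume (Set.Icc 0 T \ B) := measure_mono h1
      _ = volume (Set.Icc 0 T) - volume B := measure_diff hBsub hB.nullMeasurableSet hBfin
      _ ≤ ENNReal.ofReal T - ENNReal.ofReal ((1 - b / 8) * T) := by
          rw [Real.volume_Icc, sub_zero]
          exact tsub_le_tsub le_rfl hBmeas
      _ = ENNReal.ofReal (T - (1 - b / 8) * T) := by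
          rw [ENNReal.ofReal_sub _ (by nlinarith)]
      _ = ENNReal.ofReal (b * T / 8) := by ring_nf
  -- split integral over Icc into S and Icc \ B
  have hsplit : ∫⁻ s in Set.Icc 0 (T - T'), f s
      = (∫⁻ s in S, f s) + ∫⁻ s in Set.Icc 0 (T - T') \ B, f s := by
    have hun : Set.Icc 0 (T - T') = S ∪ (Set.Icc 0 (T - T') \ B) := by
      rw [hSdef]
      ext s
      by_cases hs : s ∈ B <;> simp [hs]
    have hdisj : Disjoint S (Set.Icc 0 (T - T') \ B) :=
      Set.disjoint_left.mpr (fun s hs h2 => h2.2 hs.1)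
    have hl := lintegral_union (μ := volume) (f := f) (A := S)
      (measurableSet_Icc.diff hB) hdisj
    rw [← hun] at hl
    exact hl
  have hY : ∫⁻ s in Set.Icc 0 (T - T') \ B, f s ≤ ENNReal.ofReal (T' * (b * T / 8)) := by
    calc ∫⁻ s in Set.Icc 0 (T - T') \ B, f s
        ≤ ∫⁻ _ in Set.Icc 0 (T - T') \ B, ENNReal.ofReal T' :=
          setLIntegral_mono' (measurableSet_Icc.diff hB) (fun s _ => hfbound s)
      _ = ENNReal.ofReal T' * volume (Set.Icc 0 (T - T') \ B) := setLIntegral_const _ _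
      _ ≤ ENNReal.ofReal T' * ENNReal.ofReal (b * T / 8) := by gcongr
      _ = ENNReal.ofReal (T' * (b * T / 8)) := (ENNReal.ofReal_mul hT'.le).symm
  -- lower bound for integral over S
  have hXS : ENNReal.ofReal (3 / 4 * (b * T * T')) ≤ ∫⁻ s in S, f s := by
    have hIcc : ENNReal.ofReal (T' * (b * T - 2 * T')) ≤ ∫⁻ s in Set.Icc 0 (T - T'), f s := by
      rw [← hfst]; exact hsnd
    have h1 : ENNReal.ofReal (T' * (b * T - 2 * T')) - ENNReal.ofReal (T' * (b * T / 8))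
        ≤ ∫⁻ s in S, f s := by
      rw [hsplit] at hIcc
      exact tsub_le_iff_right.mpr (le_trans hIcc (by gcongr))
    refine le_trans ?_ h1
    rw [← ENNReal.ofReal_sub _ (by positivity)]
    apply ENNReal.ofReal_le_ofReal
    nlinarith
  -- Chebyshev
  have hcheb : ∫⁻ s in S, f s ≤ ENNReal.ofReal T' * volume C + ENNReal.ofReal (b * T' / 4) * volume S := by
    calc ∫⁻ s in S, f s
        ≤ ∫⁻ s in S, (C.indicator (fun _ => ENNReal.ofReal T') s + ENNReal.ofReal (b * T' / 4)) := by
          apply setLIntegral_mono' hSmeas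
          intro s hs
          by_cases hsC : s ∈ C
          · rw [Set.indicator_of_mem hsC]
            exact le_add_of_le_of_nonneg (hfbound s) zero_le
          · rw [Set.indicator_of_notMem hsC, zero_add]
            have : ¬ ENNReal.ofReal (b * T' / 4) ≤ f s := fun h => hsC ⟨hs, h⟩
            exact le_of_not_ge this
      _ = (∫⁻ s in S, C.indicator (fun _ => ENNReal.ofReal T') s)
            + ∫⁻ _ in S, ENNReal.ofReal (b * T' / 4) := by
          rw [lintegral_add_right _ measurable_const]
      _ ≤ (∫⁻ s, C.indicator (fun _ => ENNReal.ofReal T') s)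
            + ENNReal.ofReal (b * T' / 4) * volume S := by
          rw [setLIntegral_const]
          gcongr
          exact Measure.restrict_le_self
      _ = ENNReal.ofReal T' * volume C + ENNReal.ofReal (b * T' / 4) * volume S := by
          rw [lintegral_indicator_const hCmeas]
  have hSvol : volume S ≤ ENNReal.ofReal T := by
    calc volume S ≤ volume (Set.Icc 0 T) := measure_mono (fun s hs => hBsub hs.1)
      _ = ENNReal.ofReal T := by rw [Real.volume_Icc, sub_zero]
  have hmain : ENNReal.ofReal (3 / 4 * (b * T * T'))
      ≤ ENNReal.ofReal T' * volume C + ENNReal.ofReal (b * T' / 4 * T) := by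
    refine le_trans hXS (le_trans hcheb ?_)
    gcongr
    rw [ENNReal.ofReal_mul (by positivity)]
    gcongr
  -- conclude
  have hfinal : ENNReal.ofReal (b * T / 2) ≤ volume C := by
    have h1 : ENNReal.ofReal (3 / 4 * (b * T * T')) - ENNReal.ofReal (b * T' / 4 * T)
        ≤ ENNReal.ofReal T' * volume C := tsub_le_iff_right.mpr hmain
    rw [← ENNReal.ofReal_sub _ (by positivity)] at h1
    have h2 : (3 / 4 * (b * T * T') - b * T' / 4 * T) = T' * (b * T / 2) := by ring
    rw [h2, ENNReal.ofReal_mul hT'.le] at h1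
    exact (ENNReal.mul_le_mul_iff_right (by simp [hT']) (by simp)).mp h1
  refine le_trans ?_ hfinal
  apply ENNReal.ofReal_le_ofReal
  linarith
end
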